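/- Consider a function of the form f(x) = Tr[O · W_L S_L(x) ⋯ W_1 S_1(x) ρ (W_L S_L(x) ⋯ W_1 S_1(x))†], where each S_ℓ(x) = exp(−i x·G^{(ℓ)}) is generated by commuting Hermitian operators with difference set Ω^{(ℓ)} of eigenvalue differences, and W_ℓ are fixed unitaries. Then f is a finite trigonometric polynomial in x whose frequency support is contained in the Minkowski sum Ω^{(1)} ⊕ ⋯ ⊕ Ω^{(L)}. -/

import Mathlib

open Finset Matrix
open scoped ComplexOrder

lemma diag_expand {n : ℕ} (dv : Fin n → ℂ) :
    Matrix.diagonal dv = ∑ i, dv i • Matrix.single i i (1:ℂ) := by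
  ext a b
  rw [Matrix.sum_apply]
  by_cases h : a = b
  · subst h
    simp [Matrix.single, mul_ite]
  · rw [Finset.sum_eq_zero fun x _ => ?_]
    · simp [Matrix.diagonal_apply, h]
    · simp only [Matrix.smul_apply, Matrix.single, Matrix.of_apply]
      have : ¬(x = a ∧ x = b) := by rintro ⟨rfl, rfl⟩; exact h rfl
      simp [this]

lemma prod_expand {n : ℕ} : ∀ (m : ℕ) (B : Fin m → Fin n → Matrix (Fin n) (Fin n) ℂ)
    (g : Fin m → Fin n → ℂ),
    (List.ofFn (fun ℓ => ∑ i, g ℓ i • B ℓ i)).reverse.prod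
      = ∑ j : Fin m → Fin n, (∏ ℓ, g ℓ (j ℓ)) •
          (List.ofFn (fun ℓ => B ℓ (j ℓ))).reverse.prod := by
  intro m
  induction m with
  | zero => intro B g; simp
  | succ m ih =>
    intro B g
    set F : (Fin (m+1) → Fin n) → Matrix (Fin n) (Fin n) ℂ := fun j =>
      (∏ ℓ, g ℓ (j ℓ)) • (List.ofFn fun ℓ => B ℓ (j ℓ)).reverse.prod with hF
    have hsum : ∑ j, F j = ∑ p : Fin n × (Fin m → Fin n), F (Fin.cons p.1 p.2) :=
      (Fintype.sum_equiv (Fin.consEquiv fun _ => Fin n) _ _ (fun p => rfl)).symm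
    rw [hsum, Fintype.sum_prod_type]
    rw [List.ofFn_succ, List.reverse_cons, List.prod_append, List.prod_singleton,
      ih (fun ℓ => B ℓ.succ) (fun ℓ => g ℓ.succ), Finset.sum_mul, Finset.sum_comm]
    refine Finset.sum_congr rfl fun jt _ => ?_
    rw [Finset.mul_sum]
    refine Finset.sum_congr rfl fun i _ => ?_
    simp only [hF, Fin.prod_univ_succ, Fin.cons_zero, Fin.cons_succ, List.ofFn_succ,
      List.reverse_cons, List.prod_append, List.prod_singleton, smul_mul_assoc,
      mul_smul_comm, smul_smul]

/-- Minkowski-sum band limit for re-uploading circuits: with encoder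
    blocks `S_ℓ(x) = exp(−i x·G^{(ℓ)})` generated by commuting Hermitian operators
    (here given in spectral form via unitaries `U ℓ` and joint eigenvalue vectors
    `lam ℓ j ∈ ℝ^d`), fixed unitaries `W_ℓ`, a density matrix `ρ` and a Hermitian
    observable `O`, the model
    `f(x) = Tr[O · W_L S_L(x) ⋯ W_1 S_1(x) ρ (W_L S_L(x) ⋯ W_1 S_1(x))†]`
    is a finite trigonometric polynomial in `x` whose frequencies are sums
    `Σ_ℓ (λ^{(ℓ)}_{j_ℓ} − λ^{(ℓ)}_{k_ℓ})` of layer-wise eigenvalue differences,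
    i.e. its frequency support is contained in the Minkowski sum
    `Ω^{(1)} ⊕ ⋯ ⊕ Ω^{(L)}`. -/
theorem reuploading_minkowski_band_limit (n d L : ℕ)
    (U : Fin L → Matrix (Fin n) (Fin n) ℂ)
    (hU : ∀ ℓ, U ℓ ∈ Matrix.unitaryGroup (Fin n) ℂ)
    (lam : Fin L → Fin n → Fin d → ℝ)
    (S : Fin L → (Fin d → ℝ) → Matrix (Fin n) (Fin n) ℂ)
    (hS : ∀ ℓ x, S ℓ x =
      U ℓ *
        Matrix.diagonal (fun j =>
          Complex.exp ((-Complex.I) * ∑ α, ((lam ℓ j α : ℝ) : ℂ) * ((x α : ℝ) : ℂ))) *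
        star (U ℓ))
    (W : Fin L → Matrix (Fin n) (Fin n) ℂ)
    (hW : ∀ ℓ, W ℓ ∈ Matrix.unitaryGroup (Fin n) ℂ)
    (ρ O : Matrix (Fin n) (Fin n) ℂ)
    (hρ : ρ.PosSemidef) (hρ1 : ρ.trace = 1) (hO : O.IsHermitian)
    (f : (Fin d → ℝ) → ℂ)
    (hf : ∀ x, f x =
      Matrix.trace
        (O * (List.ofFn (fun ℓ : Fin L => W ℓ * S ℓ x)).reverse.prod * ρ *
          star ((List.ofFn (fun ℓ : Fin L => W ℓ * S ℓ x)).reverse.prod))) :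
    ∃ c : (Fin L → Fin n) → (Fin L → Fin n) → ℂ, ∀ x, f x =
      ∑ j : Fin L → Fin n, ∑ k : Fin L → Fin n,
        c j k *
          Complex.exp ((-Complex.I) *
            ∑ α, (((∑ ℓ, (lam ℓ (j ℓ) α - lam ℓ (k ℓ) α)) : ℝ) : ℂ) * ((x α : ℝ) : ℂ)) := by
  classical
  set g : Fin L → Fin n → (Fin d → ℝ) → ℂ := fun ℓ i x =>
    Complex.exp ((-Complex.I) * ∑ α, ((lam ℓ i α : ℝ) : ℂ) * ((x α : ℝ) : ℂ)) with hg
  set B : Fin L → Fin n → Matrix (Fin n) (Fin n) ℂ := fun ℓ i =>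
    W ℓ * (U ℓ * Matrix.single i i (1:ℂ) * star (U ℓ)) with hB
  have hWS : ∀ ℓ x, W ℓ * S ℓ x = ∑ i, g ℓ i x • B ℓ i := by
    intro ℓ x
    rw [hS, diag_expand]
    simp only [Finset.mul_sum, Finset.sum_mul, Matrix.smul_mul, Matrix.mul_smul, hB, hg,
      mul_assoc]
  set P : (Fin L → Fin n) → Matrix (Fin n) (Fin n) ℂ := fun j =>
    (List.ofFn fun ℓ => B ℓ (j ℓ)).reverse.prod with hP
  have hM : ∀ x, (List.ofFn (fun ℓ : Fin L => W ℓ * S ℓ x)).reverse.prod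
      = ∑ j : Fin L → Fin n, (∏ ℓ, g ℓ (j ℓ) x) • P j := by
    intro x
    simp only [hWS]
    exact prod_expand L B (fun ℓ i => g ℓ i x)
  refine ⟨fun j k => Matrix.trace (O * P j * ρ * star (P k)), fun x => ?_⟩
  have key : ∀ j k : Fin L → Fin n,
      (∏ ℓ, g ℓ (j ℓ) x) * (starRingEnd ℂ) (∏ ℓ, g ℓ (k ℓ) x)
        = Complex.exp ((-Complex.I) *
            ∑ α, (((∑ ℓ, (lam ℓ (j ℓ) α - lam ℓ (k ℓ) α)) : ℝ) : ℂ) * ((x α : ℝ) : ℂ)) := by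
    intro j k
    rw [map_prod, ← Finset.prod_mul_distrib]
    have hcj : ∀ ℓ : Fin L, (starRingEnd ℂ) (g ℓ (k ℓ) x)
        = Complex.exp (Complex.I * ∑ α, ((lam ℓ (k ℓ) α : ℝ) : ℂ) * ((x α : ℝ) : ℂ)) := by
      intro ℓ
      rw [hg, ← Complex.exp_conj]
      congr 1
      simp [map_sum, _root_.map_mul, Complex.conj_ofReal, Complex.conj_I]
    simp only [hcj]
    simp only [hg, ← Complex.exp_add]
    rw [← Complex.exp_sum]
    congr 1
    calc ∑ ℓ, ((-Complex.I) * (∑ α, ((lam ℓ (j ℓ) α : ℝ) : ℂ) * ((x α : ℝ) : ℂ))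
            + Complex.I * (∑ α, ((lam ℓ (k ℓ) α : ℝ) : ℂ) * ((x α : ℝ) : ℂ)))
        = ∑ ℓ, ∑ α, ((-Complex.I) * (((lam ℓ (j ℓ) α : ℝ) : ℂ) * ((x α : ℝ) : ℂ))
            + Complex.I * (((lam ℓ (k ℓ) α : ℝ) : ℂ) * ((x α : ℝ) : ℂ))) := by
          refine Finset.sum_congr rfl fun ℓ _ => ?_
          rw [Finset.mul_sum, Finset.mul_sum, ← Finset.sum_add_distrib]
      _ = ∑ α, ∑ ℓ, ((-Complex.I) * (((lam ℓ (j ℓ) α : ℝ) : ℂ) * ((x α : ℝ) : ℂ))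
            + Complex.I * (((lam ℓ (k ℓ) α : ℝ) : ℂ) * ((x α : ℝ) : ℂ))) := Finset.sum_comm
      _ = (-Complex.I) *
            ∑ α, (((∑ ℓ, (lam ℓ (j ℓ) α - lam ℓ (k ℓ) α)) : ℝ) : ℂ) * ((x α : ℝ) : ℂ) := by
          rw [Finset.mul_sum]
          refine Finset.sum_congr rfl fun α _ => ?_
          push_cast
          rw [Finset.sum_mul, Finset.mul_sum]
          refine Finset.sum_congr rfl fun ℓ _ => ?_
          ring
  rw [hf, hM]
  simp only [Matrix.mul_sum, Matrix.sum_mul, star_sum, star_smul, Matrix.trace_sum,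
    mul_smul_comm, smul_mul_assoc, smul_smul, Matrix.trace_smul, smul_eq_mul, star_trivial,
    RCLike.star_def]
  rw [Finset.sum_comm]
  refine Finset.sum_congr rfl fun j _ => ?_
  rw [Finset.mul_sum]
  refine Finset.sum_congr rfl fun k _ => ?_
  rw [← key k j]
  ring
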